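/- Let γ : [0,1] → [0,∞) be decreasing and α-Lipschitz with γ(1)=0, γ(0) ≥ h, and suppose θ ↦ γ(θ)/(1−θ) is increasing on [0,1). Then γ satisfies the subadditivity inequality γ(λθ) ≤ γ(θ) + θγ(λ) for all λ, θ ∈ [0,1]; that is, 𝓖̄_h(α) ⊂ 𝓖(α). -/
import Mathlib


open Set Filter

/-- If `γ : [0,1] → [0,∞)` is decreasing, `α`-Lipschitz, with `γ(1)=0`, `γ(0) ≥ h`, and
`θ ↦ γ(θ)/(1-θ)` increasing on `[0,1)`, then `γ` satisfies the subadditivity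
`γ(λθ) ≤ γ(θ) + θγ(λ)` for all `λ, θ ∈ [0,1]`; i.e. `𝓖̄_h(α) ⊂ 𝓖(α)`. -/
theorem Gbar_subset_G (h α : ℝ) (hh : 0 ≤ h) (hhα : h ≤ α) (γ : ℝ → ℝ)
    (hγ1 : γ 1 = 0) (hγ0 : h ≤ γ 0)
    (hpos : ∀ θ : ℝ, 0 ≤ θ → θ ≤ 1 → 0 ≤ γ θ)
    (hdec : ∀ a b : ℝ, 0 ≤ a → a ≤ b → b ≤ 1 → γ b ≤ γ a)
    (hlip : ∀ a b : ℝ, 0 ≤ a → a ≤ 1 → 0 ≤ b → b ≤ 1 → |γ a - γ b| ≤ α * |a - b|)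
    (hratio : ∀ a b : ℝ, 0 ≤ a → a ≤ b → b < 1 → γ a / (1 - a) ≤ γ b / (1 - b)) :
    ∀ lam θ : ℝ, 0 ≤ lam → lam ≤ 1 → 0 ≤ θ → θ ≤ 1 →
      γ (lam * θ) ≤ γ θ + θ * γ lam := by
  intro lam θ hl0 hl1 ht0 ht1
  rcases eq_or_lt_of_le ht1 with rfl | ht1'
  · simp [hγ1]
  rcases eq_or_lt_of_le hl1 with rfl | hl1'
  · simp [hγ1]
  have hθd : 0 < 1 - θ := by linarith
  have hld : 0 < 1 - lam := by linarith
  have hlt0 : 0 ≤ lam * θ := mul_nonneg hl0 ht0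
  have hpt : 0 < 1 - lam * θ := by nlinarith
  rcases le_total lam θ with hle | hle
  · have h1 : γ (lam * θ) / (1 - lam * θ) ≤ γ lam / (1 - lam) :=
      hratio _ _ hlt0 (by nlinarith) hl1'
    have h2 : γ lam / (1 - lam) ≤ γ θ / (1 - θ) := hratio _ _ hl0 hle ht1'
    rw [div_le_div_iff₀ hpt hld] at h1
    rw [div_le_div_iff₀ hld hθd] at h2
    nlinarith [hpos lam hl0 hl1]
  · have h1 : γ (lam * θ) / (1 - lam * θ) ≤ γ θ / (1 - θ) :=
      hratio _ _ hlt0 (by nlinarith) ht1'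
    have h2 : γ θ / (1 - θ) ≤ γ lam / (1 - lam) := hratio _ _ ht0 hle hl1'
    rw [div_le_div_iff₀ hpt hθd] at h1
    rw [div_le_div_iff₀ hθd hld] at h2
    nlinarith [hpos θ ht0 ht1]
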